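/- The restriction function ↾(x/a) = a↾x = {⟨z, a'z⟩ : z∈x} and the image function rng(x/a) = a''x = {a'z : z∈x} are both in PCSF, where a'z = ⋃{d : ⟨z,d⟩ ∈ a} with Kuratowski pairs ⟨z,d⟩ = {{z},{z,d}}. -/

import Mathlib

open scoped Classical

noncomputable section

namespace PCSFPaper

/-! ## Basic ZF-set helpers -/

/-- Image `{f z : z ∈ x}` of a ZF-set under an arbitrary class function. -/
noncomputable def zImage (f : ZFSet → ZFSet) (x : ZFSet) : ZFSet :=
  @ZFSet.image f (Classical.allZFSetDefinable fun s => f (s 0)) x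

/-- Kuratowski ordered pair `⟨c,d⟩ = {{c},{c,d}}`. -/
def kpair (c d : ZFSet) : ZFSet := {{c}, {c, d}}

/-! ## Δ₀ formulas of the language of set theory -/

/-- Δ₀ (bounded) formulas in the first-order language of set theory,
with `k` free variables.  In the bounded quantifiers `ball i φ`/`bex i φ`
the newly bound variable (ranging over the elements of variable `i`)
becomes variable `0` of `φ`, the old variables being shifted up by one. -/
inductive D0 : ℕ → Type
  | mem {k : ℕ} (i j : Fin k) : D0 k
  | eq {k : ℕ} (i j : Fin k) : D0 k
  | not {k : ℕ} : D0 k → D0 k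
  | and {k : ℕ} : D0 k → D0 k → D0 k
  | or {k : ℕ} : D0 k → D0 k → D0 k
  | ball {k : ℕ} (i : Fin k) : D0 (k + 1) → D0 k
  | bex {k : ℕ} (i : Fin k) : D0 (k + 1) → D0 k

/-- Satisfaction of Δ₀ formulas in the universe of ZF-sets. -/
def D0.Sat : ∀ {k : ℕ}, D0 k → (Fin k → ZFSet) → Prop
  | _, .mem i j, v => v i ∈ v j
  | _, .eq i j, v => v i = v j
  | _, .not φ, v => ¬ φ.Sat v
  | _, .and φ ψ, v => φ.Sat v ∧ ψ.Sat v
  | _, .or φ ψ, v => φ.Sat v ∨ ψ.Sat v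
  | _, .ball i φ, v => ∀ z ∈ v i, φ.Sat (Fin.cons z v)
  | _, .bex i φ, v => ∃ z ∈ v i, φ.Sat (Fin.cons z v)

/-- A `k`-ary relation on sets is Δ₀ iff it is defined by some Δ₀ formula. -/
def IsDelta0 {k : ℕ} (R : (Fin k → ZFSet) → Prop) : Prop :=
  ∃ φ : D0 k, ∀ v, R v ↔ φ.Sat v

/-! ## The classes PCSF⁻ and PCSF -/

/-- The class `PCSF⁻` of predicatively computable set functions taking only
safe arguments: generated from projections, pairing, null, union and the
membership conditional, by composition and safe separation. -/
inductive PCSFminus : ∀ m : ℕ, ((Fin m → ZFSet) → ZFSet) → Prop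
  | proj {m : ℕ} (j : Fin m) : PCSFminus m fun a => a j
  | pair : PCSFminus 2 fun a => {a 0, a 1}
  | null : PCSFminus 0 fun _ => ∅
  | union : PCSFminus 1 fun a => ZFSet.sUnion (a 0)
  | cond : PCSFminus 4 fun a => if a 2 ∈ a 3 then a 0 else a 1
  | comp {m k : ℕ} (h : (Fin k → ZFSet) → ZFSet) (t : Fin k → (Fin m → ZFSet) → ZFSet) :
      PCSFminus k h → (∀ i, PCSFminus m (t i)) →
      PCSFminus m fun a => h fun i => t i a
  | sep {m : ℕ} (h : (Fin (m + 1) → ZFSet) → ZFSet) :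
      PCSFminus (m + 1) h →
      PCSFminus (m + 1) fun a =>
        ZFSet.sep (fun b => h (Fin.snoc (Fin.init a) b) ≠ ∅) (a (Fin.last m))

/-- The class `PCSF` of predicatively computable set functions, with `n` normal
and `m` safe arguments: generated from `PCSF⁻` (whose arguments are all safe)
and projections by safe composition and predicative set recursion.  The
recursion rule is stated via its defining equation (which determines the
function uniquely, by ∈-induction); the recursion argument `x` is the first
normal argument, and the set `{f(z,ȳ/ā) : z ∈ x}` of previous values is passed
to `h` as a last, safe, argument. -/
inductive PCSF : ∀ n m : ℕ, ((Fin n → ZFSet) → (Fin m → ZFSet) → ZFSet) → Prop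
  | ofMinus {m : ℕ} (h : (Fin m → ZFSet) → ZFSet) :
      PCSFminus m h → PCSF 0 m fun _ a => h a
  | proj {n m : ℕ} (j : Fin (n + m)) : PCSF n m fun x a => Fin.append x a j
  | comp {n m k l : ℕ} (h : (Fin k → ZFSet) → (Fin l → ZFSet) → ZFSet)
      (r : Fin k → (Fin n → ZFSet) → (Fin 0 → ZFSet) → ZFSet)
      (t : Fin l → (Fin n → ZFSet) → (Fin m → ZFSet) → ZFSet) :
      PCSF k l h → (∀ i, PCSF n 0 (r i)) → (∀ i, PCSF n m (t i)) →
      PCSF n m fun x a => h (fun i => r i x Fin.elim0) fun i => t i x a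
  | recur {n m : ℕ} (h : (Fin (n + 1) → ZFSet) → (Fin (m + 1) → ZFSet) → ZFSet)
      (f : (Fin (n + 1) → ZFSet) → (Fin m → ZFSet) → ZFSet) :
      PCSF (n + 1) (m + 1) h →
      (∀ (x : ZFSet) (y : Fin n → ZFSet) (a : Fin m → ZFSet),
        f (Fin.cons x y) a =
          h (Fin.cons x y) (Fin.snoc a (zImage (fun z => f (Fin.cons z y) a) x))) →
      PCSF (n + 1) m f

/-- A relation is in `PCSF` iff its characteristic function
(`1 = {∅}` for true, `0 = ∅` for false) is in `PCSF`. -/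
def PCSFRel (n m : ℕ) (R : (Fin n → ZFSet) → (Fin m → ZFSet) → Prop) : Prop :=
  PCSF n m fun x a => if R x a then ({∅} : ZFSet) else ∅

/-! ## Transitive closure, hereditary finiteness -/

/-- Transitive closure `TC(x) = x ∪ ⋃{TC(y) : y ∈ x}` by ∈-recursion. -/
noncomputable def TCset : ZFSet → ZFSet :=
  ZFSet.mem_wf.fix fun x ih =>
    x ∪ ZFSet.sUnion (zImage (fun y => if h : y ∈ x then ih y h else ∅) x)

/-- A set is hereditarily finite iff its transitive closure is finite. -/
def IsHF (x : ZFSet) : Prop := (TCset x).toSet.Finite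

/-- `cT x` = cardinality of the transitive closure of `x`
(junk value `0` if infinite). -/
noncomputable def cT (x : ZFSet) : ℕ := (TCset x).toSet.ncard

/-- The finite union `A₁ ∪ ⋯ ∪ Aₘ`. -/
def unionFin {m : ℕ} (A : Fin m → ZFSet) : ZFSet :=
  (List.ofFn A).foldr (· ∪ ·) ∅

/-! ## The encoding ν of binary strings, application, product -/

/-- The von Neumann numeral 1 = {∅}. -/
def zOne : ZFSet := {∅}

/-- The von Neumann numeral 2 = {∅,{∅}}. -/
def zTwo : ZFSet := {∅, {∅}}

/-- The encoding of binary strings (head of the list = last appended bit):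
`ν(ε) = ∅` and `ν(s i) = ⟨i+1, ν s⟩`, a bit `i ∈ {0,1}` being represented
by the boolean `i = 1`. -/
def nu : List Bool → ZFSet
  | [] => ∅
  | b :: s => kpair (if b then zTwo else zOne) (nu s)

/-- `zApp b c = b'c = ⋃{d ∈ ⋃⋃b : ⟨c,d⟩ ∈ b}` (which is `⋃{d : ⟨c,d⟩ ∈ b}`,
since every such `d` belongs to `⋃⋃b`). -/
def zApp (b c : ZFSet) : ZFSet :=
  ZFSet.sUnion (ZFSet.sep (fun d => kpair c d ∈ b) (ZFSet.sUnion (ZFSet.sUnion b)))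

/-- Cartesian product `a × b = {⟨u,v⟩ : u ∈ a, v ∈ b}` (with Kuratowski pairs). -/
noncomputable def zProd (a b : ZFSet) : ZFSet :=
  ZFSet.sUnion (zImage (fun u => zImage (fun v => kpair u v) b) a)

/-! ## Polynomial time computability on binary strings -/

/-- The trivial encoding of binary strings over the alphabet `Bool`. -/
def boolListEncoding : Computability.Encoding (List Bool) Bool where
  encode := id
  decode := fun l => some l
  decode_encode := fun _ => rfl

/-- Encoding of a tuple of binary strings over the alphabet `Option Bool`:
the strings are listed in order, each terminated by the separator `none`. -/
def encTuple : (k : ℕ) → (Fin k → List Bool) → List (Option Bool)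
  | 0, _ => []
  | k + 1, v => (v 0).map some ++ none :: encTuple k (Fin.tail v)

/-- Splits off the first separator-terminated block. -/
def splitFirst : List (Option Bool) → List Bool × List (Option Bool)
  | [] => ([], [])
  | none :: l => ([], l)
  | some b :: l => ((splitFirst l).1.cons b, (splitFirst l).2)

theorem splitFirst_encode (s : List Bool) (rest : List (Option Bool)) :
    splitFirst (s.map some ++ none :: rest) = (s, rest) := by
  induction s with
  | nil => rfl
  | cons b s ih => simp [splitFirst, ih]

/-- Decoding of tuples of binary strings. -/
def decTuple : (k : ℕ) → List (Option Bool) → Option (Fin k → List Bool)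
  | 0, _ => some Fin.elim0
  | k + 1, l =>
    (decTuple k (splitFirst l).2).map fun v => Fin.cons (splitFirst l).1 v

theorem decTuple_encTuple : ∀ (k : ℕ) (v : Fin k → List Bool),
    decTuple k (encTuple k v) = some v := by
  intro k
  induction k with
  | zero =>
    intro v
    simp only [decTuple]
    congr
    exact funext fun i => i.elim0
  | succ k ih =>
    intro v
    simp [decTuple, encTuple, splitFirst_encode, ih (Fin.tail v), Fin.cons_self_tail]

/-- The standard encoding of tuples of binary strings. -/
def tupleEncoding (k : ℕ) : Computability.Encoding (Fin k → List Bool) (Option Bool) where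
  encode := encTuple k
  decode := decTuple k
  decode_encode := decTuple_encTuple k

/-- A function on tuples of binary strings is polynomial time computable iff
some two-stack machine computes it in polynomial time (Mathlib's notion). -/
def PolyTimeStringFun {k : ℕ} (f : (Fin k → List Bool) → List Bool) : Prop :=
  Nonempty (Turing.TM2ComputableInPolyTime (tupleEncoding k).encode boolListEncoding.encode f)

/-- Polynomial time computability for functions on ℕ,
with respect to the standard binary encoding of naturals. -/
def PolyTimeNatFun (f : ℕ → ℕ) : Prop :=
  Nonempty (Turing.TM2ComputableInPolyTime Computability.encodingNatBool.encode
    Computability.encodingNatBool.encode f)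

/-! ## A feasible encoding of lists of naturals by naturals -/

/-- Reads a list of bits (least significant first) as a natural number. -/
def bitsToNat (l : List Bool) : ℕ := l.foldr (fun b n => Nat.bit b n) 0

/-- A standard feasible (linear size) encoding of lists of natural numbers:
every bit of the binary expansion of an entry is escaped as `[false, b]`,
entries are terminated by `[true, true]`, and a final `true` protects
leading zeros. -/
def encodeNatList (l : List ℕ) : ℕ :=
  bitsToNat
    ((l.map fun n => (Nat.bits n).foldr (fun b acc => false :: b :: acc) [true, true]).foldr
        (· ++ ·) [true])

/-! ## Rooted DAGs encoding hereditarily finite sets -/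

/-- A rooted DAG: a finite set `V` of natural numbers, edges `E ⊆ V × V`
going strictly downwards, and a root `r ∈ V` which is the only node of
indegree zero. -/
structure RootedDag where
  V : Finset ℕ
  E : Finset (ℕ × ℕ)
  r : ℕ
  edge_mem : ∀ e ∈ E, e.1 ∈ V ∧ e.2 ∈ V
  root_mem : r ∈ V
  root_indeg : ∀ e ∈ E, e.2 ≠ r
  reach_nonroot : ∀ a ∈ V, a ≠ r → ∃ b ∈ V, (b, a) ∈ E
  desc : ∀ e ∈ E, e.2 < e.1

namespace RootedDag

/-- The children of a node. -/
def children (G : RootedDag) (a : ℕ) : Finset ℕ :=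
  (G.E.filter fun e => e.1 = a).image Prod.snd

theorem children_lt (G : RootedDag) {a b : ℕ} (h : b ∈ G.children a) : b < a := by
  simp only [children, Finset.mem_image, Finset.mem_filter] at h
  obtain ⟨e, ⟨heE, he1⟩, he2⟩ := h
  have := G.desc e heE
  omega

/-- The hereditarily finite set encoded at a node:
`set_G(a) = {set_G(b) : (a,b) ∈ E}`. -/
def setAt (G : RootedDag) (a : ℕ) : ZFSet.{0} :=
  (((G.children a).attach.toList).map fun b => G.setAt b.1).foldr insert ∅
termination_by a
decreasing_by exact G.children_lt b.2

/-- The hereditarily finite set encoded by a rooted DAG. -/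
def set (G : RootedDag) : ZFSet.{0} := G.setAt G.r

/-- A DAG is fully collapsed iff distinct nodes encode distinct sets. -/
def FullyCollapsed (G : RootedDag) : Prop :=
  ∀ a ∈ G.V, ∀ b ∈ G.V, G.setAt a = G.setAt b → a = b

/-- Reachability along edges. -/
def Reaches (G : RootedDag) (a b : ℕ) : Prop :=
  Relation.ReflTransGen (fun u v => (u, v) ∈ G.E) a b

/-- The node set of the sub-DAG `G|a` of nodes reachable from `a`. -/
noncomputable def reachSet (G : RootedDag) (a : ℕ) : Finset ℕ :=
  G.V.filter fun b => G.Reaches a b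

/-- A DAG is balanced iff each node `a` is at most the number of nodes of `G|a`. -/
def Balanced (G : RootedDag) : Prop :=
  ∀ a ∈ G.V, a ≤ (G.reachSet a).card

end RootedDag

/-- The numeric code `⌈G⌉` of a rooted DAG: the code of the triple consisting
of (the code of) the sorted list of vertices, (the code of) the sorted list of
pair-coded edges, and the root. -/
noncomputable def RootedDag.code (G : RootedDag) : ℕ :=
  encodeNatList [encodeNatList (G.V.sort (· ≤ ·)),
    encodeNatList ((G.E.image fun e => Nat.pair e.1 e.2).sort (· ≤ ·)), G.r]

/-- The finite set `{l₀, …, l_{n-1}}` as a ZF-set. -/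
def zSetOfList (l : List ZFSet) : ZFSet := l.foldr insert ∅


/-! ### Auxiliary development for Statement 10 -/

section Statement10Aux

lemma mem_zImage {f : ZFSet → ZFSet} {x y : ZFSet} :
    y ∈ zImage f x ↔ ∃ z ∈ x, f z = y :=
  @ZFSet.mem_image f (Classical.allZFSetDefinable fun s => f (s 0)) x y

lemma zImage_congr {f g : ZFSet → ZFSet} {x : ZFSet} (h : ∀ z ∈ x, f z = g z) :
    zImage f x = zImage g x := by
  apply ZFSet.ext; intro y
  simp only [mem_zImage]
  constructor
  · rintro ⟨z, hz, rfl⟩; exact ⟨z, hz, (h z hz).symm⟩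
  · rintro ⟨z, hz, rfl⟩; exact ⟨z, hz, h z hz⟩

lemma one_ne_empty : ({∅} : ZFSet) ≠ ∅ := by
  intro h
  have : (∅ : ZFSet) ∈ ({∅} : ZFSet) := ZFSet.mem_singleton.mpr rfl
  rw [h] at this
  exact ZFSet.notMem_empty _ this

lemma chi_ne {P : Prop} : ((if P then ({∅} : ZFSet) else ∅) ≠ ∅) ↔ P := by
  by_cases h : P <;> simp [h, one_ne_empty]

lemma sep_ext {p q : ZFSet → Prop} {x : ZFSet} (h : ∀ b, p b ↔ q b) :
    ZFSet.sep p x = ZFSet.sep q x := by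
  apply ZFSet.ext; intro y; simp [ZFSet.mem_sep, h]

namespace PCSFminus

variable {m : ℕ}

lemma congr' {f g : (Fin m → ZFSet) → ZFSet} (hf : PCSFminus m f)
    (h : ∀ a, f a = g a) : PCSFminus m g := (funext h : f = g) ▸ hf

lemma subst {k : ℕ} {h : (Fin k → ZFSet) → ZFSet} (hh : PCSFminus k h)
    (σ : Fin k → Fin m) : PCSFminus m (fun a => h (fun i => a (σ i))) :=
  PCSFminus.comp h (fun i a => a (σ i)) hh (fun i => PCSFminus.proj (σ i))

lemma projC (j : Fin m) : PCSFminus m (fun a => a j) := PCSFminus.proj j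

lemma emptyC : PCSFminus m (fun _ => (∅ : ZFSet)) :=
  PCSFminus.comp (fun _ => (∅ : ZFSet)) Fin.elim0 PCSFminus.null (fun i => i.elim0)

lemma pairC {f g} (hf : PCSFminus m f) (hg : PCSFminus m g) :
    PCSFminus m (fun a => ({f a, g a} : ZFSet)) := by
  have := PCSFminus.comp (fun a => ({a 0, a 1} : ZFSet)) ![f, g] PCSFminus.pair ?_
  · exact this
  · intro i; fin_cases i <;> assumption

lemma unionC {f} (hf : PCSFminus m f) :
    PCSFminus m (fun a => ZFSet.sUnion (f a)) := by
  have := PCSFminus.comp (fun a => ZFSet.sUnion (a 0)) ![f] PCSFminus.union ?_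
  · exact this
  · intro i; fin_cases i <;> assumption

lemma condC {f g c d} (hf : PCSFminus m f) (hg : PCSFminus m g)
    (hc : PCSFminus m c) (hd : PCSFminus m d) :
    PCSFminus m (fun a => if c a ∈ d a then f a else g a) := by
  have := PCSFminus.comp (fun a => if a 2 ∈ a 3 then a 0 else a 1) ![f, g, c, d]
    PCSFminus.cond ?_
  · exact this
  · intro i; fin_cases i <;> assumption

lemma singletonC {f} (hf : PCSFminus m f) :
    PCSFminus m (fun a => ({f a} : ZFSet)) :=
  (pairC hf hf).congr' fun a => by
    apply ZFSet.ext; intro y; simp [ZFSet.mem_pair, ZFSet.mem_singleton]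

lemma oneC : PCSFminus m (fun _ => ({∅} : ZFSet)) := singletonC emptyC

lemma binUnionC {f g} (hf : PCSFminus m f) (hg : PCSFminus m g) :
    PCSFminus m (fun a => f a ∪ g a) :=
  (unionC (pairC hf hg)).congr' fun a => ZFSet.sUnion_pair _ _

lemma kpairC {f g} (hf : PCSFminus m f) (hg : PCSFminus m g) :
    PCSFminus m (fun a => kpair (f a) (g a)) :=
  pairC (singletonC hf) (pairC hf hg)

lemma initC {f} (hf : PCSFminus m f) :
    PCSFminus (m + 1) (fun a => f (Fin.init a)) :=
  subst hf Fin.castSucc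

lemma sepC {h : (Fin (m + 1) → ZFSet) → ZFSet} (hh : PCSFminus (m + 1) h)
    {D} (hD : PCSFminus m D) :
    PCSFminus m (fun a => ZFSet.sep (fun b => h (Fin.snoc a b) ≠ ∅) (D a)) := by
  have G := PCSFminus.sep h hh
  have comp := PCSFminus.comp _
    (Fin.snoc (α := fun _ => (Fin m → ZFSet) → ZFSet) (fun j a => a j) D) G ?_
  · refine comp.congr' fun a => ?_
    have hw : (fun i => Fin.snoc (α := fun _ => (Fin m → ZFSet) → ZFSet)
        (fun j a => a j) D i a) = Fin.snoc a (D a) := by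
      funext i
      induction i using Fin.lastCases with
      | last => simp
      | cast j => simp
    rw [hw, Fin.init_snoc, Fin.snoc_last]
  · intro i
    induction i using Fin.lastCases with
    | last => simpa using hD
    | cast j => simpa using PCSFminus.proj j

lemma memTestC {f g} (hf : PCSFminus m f) (hg : PCSFminus m g) :
    PCSFminus m (fun a => if f a ∈ g a then ({∅} : ZFSet) else ∅) :=
  condC oneC emptyC hf hg

lemma zAppC {f g} (hf : PCSFminus m f) (hg : PCSFminus m g) :
    PCSFminus m (fun a => zApp (f a) (g a)) := by
  have hcond : PCSFminus (m + 1)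
      (fun w => if kpair (g (Fin.init w)) (w (Fin.last m)) ∈ f (Fin.init w)
        then ({∅} : ZFSet) else ∅) :=
    memTestC (kpairC (initC hg) (projC (Fin.last m))) (initC hf)
  have := unionC (sepC hcond (unionC (unionC hf)))
  refine this.congr' fun a => ?_
  unfold zApp
  congr 1
  refine sep_ext fun d => ?_
  rw [Fin.init_snoc, Fin.snoc_last, chi_ne]

end PCSFminus

namespace PCSF

lemma congr' {n m} {f g : (Fin n → ZFSet) → (Fin m → ZFSet) → ZFSet}
    (hf : PCSF n m f) (h : ∀ x a, f x a = g x a) : PCSF n m g := by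
  have e : f = g := funext fun x => funext (h x)
  exact e ▸ hf

lemma ofMinusComp {n m k : ℕ} {H : (Fin k → ZFSet) → ZFSet} (hH : PCSFminus k H)
    (t : Fin k → (Fin n → ZFSet) → (Fin m → ZFSet) → ZFSet)
    (ht : ∀ i, PCSF n m (t i)) :
    PCSF n m (fun x a => H (fun i => t i x a)) :=
  PCSF.comp (fun _ a => H a) Fin.elim0 t (PCSF.ofMinus H hH) (fun i => i.elim0) ht

lemma projX0 {m : ℕ} : PCSF 1 m (fun x _ => x 0) := by
  have := PCSF.proj (n := 1) (m := m) (Fin.castAdd m (0 : Fin 1))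
  refine this.congr' fun x a => ?_
  rw [Fin.append_left]

lemma projA {m : ℕ} (j : Fin m) : PCSF 1 m (fun _ a => a j) := by
  have := PCSF.proj (n := 1) (m := m) (Fin.natAdd 1 j)
  refine this.congr' fun x a => ?_
  rw [Fin.append_right]

end PCSF

/-- Generic auxiliary recursion: `gRec g a x = {g a x} ∪ ⋃ {gRec g a z : z ∈ x}`,
so that `gRec g a x = {g a w : w ∈ TC({x})}`. -/
noncomputable def gRec (g : ZFSet → ZFSet → ZFSet) (a : ZFSet) : ZFSet → ZFSet :=
  ZFSet.mem_wf.fix fun x ih =>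
    {g a x} ∪ ZFSet.sUnion (zImage (fun z => if h : z ∈ x then ih z h else ∅) x)

lemma gRec_eq (g : ZFSet → ZFSet → ZFSet) (a x : ZFSet) :
    gRec g a x = {g a x} ∪ ZFSet.sUnion (zImage (fun z => gRec g a z) x) := by
  rw [gRec, WellFounded.fix_eq]
  exact congrArg (fun s => {g a x} ∪ ZFSet.sUnion s)
    (zImage_congr fun z hz => dif_pos hz)

lemma g_mem_gRec {g : ZFSet → ZFSet → ZFSet} {a x z : ZFSet} (hz : z ∈ x) :
    g a z ∈ gRec g a x := by
  rw [gRec_eq]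
  apply ZFSet.mem_union.mpr
  right
  refine ZFSet.mem_sUnion.mpr ⟨gRec g a z, mem_zImage.mpr ⟨z, hz, rfl⟩, ?_⟩
  rw [gRec_eq]
  exact ZFSet.mem_union.mpr (Or.inl (ZFSet.mem_singleton.mpr rfl))

/-- The main workhorse: if `g` is `PCSF⁻` then `(x/a) ↦ {g(a,z) : z ∈ x}` is `PCSF`. -/
lemma main_zImage (g : ZFSet → ZFSet → ZFSet)
    (hg : PCSFminus 2 (fun w => g (w 0) (w 1))) :
    PCSF 1 1 (fun x a => zImage (fun z => g (a 0) z) (x 0)) := by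
  -- the step function of the recursion
  have H3 : PCSFminus 3 (fun b => ({g (b 1) (b 0)} : ZFSet) ∪ ZFSet.sUnion (b 2)) :=
    PCSFminus.binUnionC (PCSFminus.singletonC (hg.subst (m := 3) ![1, 0]))
      (PCSFminus.unionC (PCSFminus.projC 2))
  have hrec : PCSF 1 2 (fun x a => ({g (a 0) (x 0)} : ZFSet) ∪ ZFSet.sUnion (a 1)) := by
    have := PCSF.ofMinusComp (n := 1) (m := 2) H3 ![fun x _ => x 0, fun _ a => a 0, fun _ a => a 1] ?_
    · exact this
    · intro i
      fin_cases i
      exacts [PCSF.projX0, PCSF.projA 0, PCSF.projA 1]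
  -- f(x/a) = gRec g a x, by predicative set recursion
  have frec : PCSF 1 1 (fun x a => gRec g (a 0) (x 0)) := by
    refine PCSF.recur _ _ hrec ?_
    intro x y a
    exact gRec_eq g (a 0) x
  -- the inner separation {z ∈ u : c ∈ {g(v,z)}}
  have inner4 : PCSFminus 4
      (fun w => if w 2 ∈ ({g (w 1) (w 3)} : ZFSet) then ({∅} : ZFSet) else ∅) :=
    PCSFminus.memTestC (PCSFminus.projC 2)
      (PCSFminus.singletonC (hg.subst (m := 4) ![1, 3]))
  have innerSep : PCSFminus 3
      (fun b => ZFSet.sep (fun z => b 2 ∈ ({g (b 1) z} : ZFSet)) (b 0)) := by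
    have := PCSFminus.sepC inner4 (PCSFminus.projC 0)
    refine this.congr' fun b => ?_
    exact sep_ext fun z => chi_ne
  -- the outer separation
  have h4 : PCSFminus 4
      (fun w => ZFSet.sep (fun z => w 3 ∈ ({g (w 1) z} : ZFSet)) (w 0)) :=
    innerSep.subst (m := 4) ![0, 1, 3]
  have outer : PCSFminus 3
      (fun b => ZFSet.sep
        (fun c => ZFSet.sep (fun z => c ∈ ({g (b 1) z} : ZFSet)) (b 0) ≠ ∅) (b 2)) :=
    PCSFminus.sepC h4 (PCSFminus.projC 2)
  -- assemble
  have F : PCSF 1 1 (fun x a => ZFSet.sep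
      (fun c => ZFSet.sep (fun z => c ∈ ({g (a 0) z} : ZFSet)) (x 0) ≠ ∅)
      (gRec g (a 0) (x 0))) := by
    have := PCSF.ofMinusComp (n := 1) (m := 1) outer
      ![fun x _ => x 0, fun _ a => a 0, fun x a => gRec g (a 0) (x 0)] ?_
    · exact this
    · intro i
      fin_cases i
      exacts [PCSF.projX0, PCSF.projA 0, frec]
  refine F.congr' fun x a => ?_
  apply ZFSet.ext; intro c
  simp only [ZFSet.mem_sep, mem_zImage]
  constructor
  · rintro ⟨hcT, hne⟩
    rcases ZFSet.eq_empty_or_nonempty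
        (ZFSet.sep (fun z => c ∈ ({g (a 0) z} : ZFSet)) (x 0)) with he | ⟨z, hzmem⟩
    · exact absurd he hne
    · obtain ⟨hzx, hcz⟩ := ZFSet.mem_sep.mp hzmem
      exact ⟨z, hzx, (ZFSet.mem_singleton.mp hcz).symm⟩
  · rintro ⟨z, hz, rfl⟩
    refine ⟨g_mem_gRec hz, fun h0 => ?_⟩
    have : z ∈ (∅ : ZFSet) := h0 ▸ ZFSet.mem_sep.mpr ⟨hz, ZFSet.mem_singleton.mpr rfl⟩
    exact ZFSet.notMem_empty _ this

end Statement10Aux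

/-- The restriction `↾(x/a) = a↾x = {⟨z, a'z⟩ : z ∈ x}` and
the image `rng(x/a) = a''x = {a'z : z ∈ x}` are in `PCSF` (with `x` normal
and `a` safe). -/
theorem restrict_rng_PCSF :
    PCSF 1 1 (fun x a => zImage (fun z => kpair z (zApp (a 0) z)) (x 0)) ∧
    PCSF 1 1 (fun x a => zImage (fun z => zApp (a 0) z) (x 0)) := by
  constructor
  · exact main_zImage (fun v z => kpair z (zApp v z))
      (PCSFminus.kpairC (PCSFminus.projC 1)
        (PCSFminus.zAppC (PCSFminus.projC 0) (PCSFminus.projC 1)))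
  · exact main_zImage (fun v z => zApp v z)
      (PCSFminus.zAppC (PCSFminus.projC 0) (PCSFminus.projC 1))

end PCSFPaper
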